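/- Assume μ(s̄₁) > D. Fix ρ > 1, α ≥ (ρ − 1)/k, p with 0 < p < (μ(s̄₁) − D)/(D + k·μ'(s̄₁)), and θ > (p(D + k·μ'(s̄₁)) + D)/(μ(s̄₁) − p(D + k·μ'(s̄₁)) − D). Define Ṽ on ℕ × (0, s_in) by Ṽ(x, s) = ρ^x e^{αs}/log ρ + 1/s + (1 + θ·𝟙_{x=1})/(s̄₁ − s)^p when x ≥ 1 and 0 < s < s̄₁, and Ṽ(x, s) = 0 when x = 0 or s ≥ s̄₁. Then there exist η > D and ζ > 0 such that for all integers x ≥ 1 and all s ∈ (0, s̄₁): [D(s_in − s) − k μ(s) x]·∂_s Ṽ(x, s) + μ(s)·x·(Ṽ(x+1, s) − Ṽ(x, s)) + D·x·(Ṽ(x−1, s) − Ṽ(x, s)) ≤ −η·Ṽ(x, s) + ζ·x. -/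

import Mathlib

lemma cube_le_exp' (t : ℝ) (ht : 0 ≤ t) : t ^ 3 / 27 ≤ Real.exp t := by
  have h := Real.add_one_le_exp (t / 3)
  have h3 : Real.exp t = Real.exp (t / 3) ^ 3 := by
    rw [← Real.exp_nat_mul]; ring_nf
  have h4 : (t / 3) ^ 3 ≤ Real.exp (t / 3) ^ 3 := by
    apply pow_le_pow_left₀ (by positivity) (by linarith)
  rw [h3]; nlinarith [h4]

lemma amgm' (a c s : ℝ) (hc : 0 < c) (hs : 0 < s) : a / s ≤ c / s ^ 2 + a ^ 2 / (4 * c) := by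
  rw [div_add_div _ _ (by positivity) (by positivity), div_le_div_iff₀ hs (by positivity)]
  nlinarith [sq_nonneg (a * s - 2 * c), sq_nonneg s, mul_pos hc hs]


set_option maxHeartbeats 1600000000 in
/-- Lyapunov drift condition for the Crump–Young generator: under μ(s̄₁) > D and with
the parameters ρ, α, p, θ as in the paper, there exist η > D and ζ > 0 such that
L Ṽ(x, s) ≤ −η Ṽ(x, s) + ζ x on ℕ* × (0, s̄₁). -/
theorem stmt_16
    (D sIn k : ℝ) (μ : ℝ → ℝ)
    (hD : 0 < D) (hsIn : 0 < sIn) (hk : 0 < k)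
    (hμC1 : ContDiffOn ℝ 1 μ (Set.Ici 0))
    (hμmono : StrictMonoOn μ (Set.Ici 0))
    (hμ0 : μ 0 = 0)
    (hμpos : ∀ s : ℝ, 0 < s → 0 < μ s)
    (sbar : ℕ → ℝ)
    (hsbar_mem : ∀ ℓ : ℕ, 1 ≤ ℓ → sbar ℓ ∈ Set.Ioo 0 sIn)
    (hsbar_eq : ∀ ℓ : ℕ, 1 ≤ ℓ → D * (sIn - sbar ℓ) - k * μ (sbar ℓ) * (ℓ : ℝ) = 0)
    (hμD : D < μ (sbar 1))
    (ρ α p θ : ℝ)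
    (hρ : 1 < ρ)
    (hα : (ρ - 1) / k ≤ α)
    (hp0 : 0 < p)
    (hp1 : p < (μ (sbar 1) - D) / (D + k * deriv μ (sbar 1)))
    (hθ : (p * (D + k * deriv μ (sbar 1)) + D)
            / (μ (sbar 1) - (p * (D + k * deriv μ (sbar 1)) + D)) < θ)
    (Vt : ℕ → ℝ → ℝ)
    (hVt1 : ∀ x : ℕ, 1 ≤ x → ∀ s : ℝ, 0 < s → s < sbar 1 →
      Vt x s = ρ ^ x * Real.exp (α * s) / Real.log ρ + 1 / s
        + (1 + (if x = 1 then θ else 0)) / (sbar 1 - s) ^ p)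
    (hVt0 : ∀ x : ℕ, ∀ s : ℝ, 0 < s → s < sIn → (x = 0 ∨ sbar 1 ≤ s) → Vt x s = 0) :
    ∃ η ζ : ℝ, D < η ∧ 0 < ζ ∧
      ∀ x : ℕ, 1 ≤ x → ∀ s : ℝ, 0 < s → s < sbar 1 →
        (D * (sIn - s) - k * μ s * (x : ℝ)) * deriv (Vt x) s
          + μ s * (x : ℝ) * (Vt (x + 1) s - Vt x s)
          + D * (x : ℝ) * (Vt (x - 1) s - Vt x s)
          ≤ -η * Vt x s + ζ * (x : ℝ) := by
  obtain ⟨hσ0, hσIn⟩ := Set.mem_Ioo.mp (hsbar_mem 1 le_rfl)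
  set σ := sbar 1 with hσdef
  have heq : D * (sIn - σ) = k * μ σ := by
    have h := hsbar_eq 1 le_rfl; push_cast at h; linarith
  have hm : 0 < μ σ := hμpos σ hσ0
  set m := μ σ with hmdef
  set q := D + k * deriv μ σ with hqdef
  have hmD : 0 < m - D := by linarith
  have hq : 0 < q := by
    rcases lt_trichotomy q 0 with h | h | h
    · have : (m - D) / q < 0 := div_neg_of_pos_of_neg hmD h
      linarith
    · rw [h] at hp1; simp at hp1; linarith
    · exact h
  have hpq : 0 < p * q := mul_pos hp0 hq
  have hN : p * q + D < m := by
    have := (lt_div_iff₀ hq).mp hp1; nlinarith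
  have hθpos : 0 < θ := lt_trans (div_pos (by linarith) (by linarith)) hθ
  have h1θ : (0:ℝ) < 1 + θ := by linarith
  have hθkey : (p * q + D) * (1 + θ) < m * θ := by
    have h2 := (div_lt_iff₀ (by linarith : (0:ℝ) < m - (p * q + D))).mp hθ
    nlinarith
  clear_value σ m q
  set γ := (m * θ / (1 + θ) - p * q - D) / 2 with hγdef
  have hmθ : m * θ = (p * q + D + 2 * γ) * (1 + θ) := by
    rw [hγdef]; field_simp; ring
  have hγ : 0 < γ := by nlinarith
  clear_value γ
  set η := D + γ with hηdef
  have hη0 : 0 < η := by linarith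
  clear_value η
  have hlog : 0 < Real.log ρ := Real.log_pos hρ
  have hρ0 : (0:ℝ) < ρ := by linarith
  have h1ρ : (0:ℝ) < 1 - 1 / ρ := by
    rw [sub_pos, div_lt_one hρ0]; exact hρ
  have hα0 : 0 < α := lt_of_lt_of_le (div_pos (by linarith) hk) hα
  set c₂ := D * (sIn - σ) / 2 with hc₂def
  have hc₂ : 0 < c₂ := by rw [hc₂def]; nlinarith
  clear_value c₂
  set c₃ := D * (1 - 1 / ρ) / (2 * Real.log ρ) with hc₃def
  have hc₃ : 0 < c₃ := by positivity
  clear_value c₃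
  -- linear bound on μ
  have hIccIci : Set.Icc (0:ℝ) σ ⊆ Set.Ici 0 := fun y hy => hy.1
  have hC2 : ContDiffOn ℝ 1 μ (Set.Icc 0 σ) := hμC1.mono hIccIci
  have hud := uniqueDiffOn_Icc hσ0
  obtain ⟨C0, hC0⟩ := isCompact_Icc.exists_bound_of_continuousOn
    (hC2.continuousOn_derivWithin hud le_rfl)
  set L := C0 + 1 with hLdef
  have hL0 : 0 < L := by
    have h1 := hC0 0 ⟨le_rfl, hσ0.le⟩
    have h2 := norm_nonneg (derivWithin μ (Set.Icc 0 σ) 0)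
    rw [hLdef]; linarith
  have hLlin : ∀ s ∈ Set.Icc (0:ℝ) σ, μ s ≤ L * s := by
    intro s hs
    have hdiff : DifferentiableOn ℝ μ (Set.Icc 0 σ) := hC2.differentiableOn one_ne_zero
    have h := Convex.norm_image_sub_le_of_norm_derivWithin_le (C := L) hdiff
      (fun y hy => by have := hC0 y hy; rw [hLdef]; linarith) (convex_Icc 0 σ)
      (⟨le_rfl, hσ0.le⟩ : (0:ℝ) ∈ Set.Icc (0:ℝ) σ) hs
    rw [hμ0, sub_zero, sub_zero, Real.norm_eq_abs, Real.norm_eq_abs,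
      abs_of_nonneg hs.1] at h
    calc μ s ≤ |μ s| := le_abs_self _
      _ ≤ L * s := h
  clear_value L
  -- Lemma S : absorption of k μ(s) x / s²
  set cS := c₂ / (k * L) with hcSdef
  have hcS : 0 < cS := by rw [hcSdef]; positivity
  clear_value cS
  set s₄ := Real.sqrt (c₃ * (cS * Real.log ρ) ^ 3 / (27 * k * L)) with hs₄def
  have hs₄ : 0 < s₄ := Real.sqrt_pos.mpr (by positivity)
  clear_value s₄
  set ζ₂ := k * L / s₄ with hζ₂def
  have hζ₂ : 0 < ζ₂ := by rw [hζ₂def]; positivity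
  clear_value ζ₂
  have hS : ∀ x : ℕ, 1 ≤ x → ∀ s : ℝ, 0 < s → s < σ →
      k * μ s * (x:ℝ) / s ^ 2 ≤ c₂ / s ^ 2 + c₃ * ((x:ℝ) * ρ ^ x) + ζ₂ * (x:ℝ) := by
    intro x hx1 s hs0 hsσ
    have hμs : 0 < μ s := hμpos s hs0
    have hμL : μ s ≤ L * s := hLlin s ⟨hs0.le, hsσ.le⟩
    have hx0 : (1:ℝ) ≤ (x:ℝ) := by exact_mod_cast hx1
    have hρx : (0:ℝ) < ρ ^ x := pow_pos hρ0 x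
    by_cases hcase : k * μ s * (x:ℝ) ≤ c₂
    · have h1 : k * μ s * (x:ℝ) / s ^ 2 ≤ c₂ / s ^ 2 := by gcongr
      have h2 : 0 ≤ c₃ * ((x:ℝ) * ρ ^ x) := by positivity
      have h3 : 0 ≤ ζ₂ * (x:ℝ) := by positivity
      linarith only [h1, h2, h3]
    · push_neg at hcase
      have hb1 : k * μ s * (x:ℝ) / s ^ 2 ≤ k * L * (x:ℝ) / s := by
        calc k * μ s * (x:ℝ) / s ^ 2 ≤ k * (L * s) * (x:ℝ) / s ^ 2 := by gcongr
          _ = k * L * (x:ℝ) / s := by field_simp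
      by_cases hss : s₄ ≤ s
      · have h4 : k * L * (x:ℝ) / s ≤ ζ₂ * (x:ℝ) := by
          calc k * L * (x:ℝ) / s ≤ k * L * (x:ℝ) / s₄ := by gcongr
            _ = ζ₂ * (x:ℝ) := by rw [hζ₂def]; ring
        have h5 : 0 ≤ c₂ / s ^ 2 := by positivity
        have h6 : 0 ≤ c₃ * ((x:ℝ) * ρ ^ x) := by positivity
        linarith only [hb1, h4, h5, h6]
      · push_neg at hss
        have hs2 : s ^ 2 < c₃ * (cS * Real.log ρ) ^ 3 / (27 * k * L) := by
          have h := Real.sq_sqrt (show (0:ℝ) ≤ c₃ * (cS * Real.log ρ) ^ 3 / (27 * k * L) by positivity)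
          rw [hs₄def] at hss
          calc s ^ 2 < Real.sqrt (c₃ * (cS * Real.log ρ) ^ 3 / (27 * k * L)) ^ 2 := by
                have := Real.sqrt_nonneg (c₃ * (cS * Real.log ρ) ^ 3 / (27 * k * L))
                nlinarith only [hss, hs0, this]
            _ = _ := h
        have hxc : cS < s * (x:ℝ) := by
          rw [hcSdef, div_lt_iff₀ (by positivity)]
          have h1 : k * μ s * (x:ℝ) ≤ k * (L * s) * (x:ℝ) := by gcongr
          nlinarith only [hcase, h1]
        have hexp : ((x:ℝ) * Real.log ρ) ^ 3 / 27 ≤ ρ ^ x := by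
          have h1 := cube_le_exp' ((x:ℝ) * Real.log ρ) (by positivity)
          have h2 : Real.exp ((x:ℝ) * Real.log ρ) = ρ ^ x := by
            rw [Real.exp_nat_mul, Real.exp_log hρ0]
          linarith only [h1, h2 ▸ h1]
        have hkey : k * L / s ≤ c₃ * ρ ^ x := by
          have h3 : cS * Real.log ρ / s ≤ (x:ℝ) * Real.log ρ := by
            rw [div_le_iff₀ hs0]
            nlinarith only [hlog, hxc]
          have h3' : (cS * Real.log ρ / s) ^ 3 ≤ ((x:ℝ) * Real.log ρ) ^ 3 := by
            apply pow_le_pow_left₀ (by positivity) h3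
          have h4 : c₃ * ((cS * Real.log ρ / s) ^ 3 / 27) ≤ c₃ * ρ ^ x := by
            apply mul_le_mul_of_nonneg_left _ hc₃.le
            calc (cS * Real.log ρ / s) ^ 3 / 27 ≤ ((x:ℝ) * Real.log ρ) ^ 3 / 27 := by linarith only [h3']
              _ ≤ ρ ^ x := hexp
          have h5 : k * L / s ≤ c₃ * ((cS * Real.log ρ / s) ^ 3 / 27) := by
            have hR : c₃ * ((cS * Real.log ρ / s) ^ 3 / 27)
                = c₃ * (cS * Real.log ρ) ^ 3 / (27 * s ^ 3) := by
              rw [div_pow]; ring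
            rw [hR, div_le_div_iff₀ hs0 (by positivity)]
            have hs3 : 27 * (k * L) * s ^ 2 ≤ c₃ * (cS * Real.log ρ) ^ 3 := by
              rw [lt_div_iff₀ (by positivity : (0:ℝ) < 27 * k * L)] at hs2
              nlinarith only [hs2]
            nlinarith only [mul_le_mul_of_nonneg_right hs3 hs0.le]
          linarith only [h4, h5]
        have h6 : k * L * (x:ℝ) / s ≤ c₃ * ((x:ℝ) * ρ ^ x) := by
          have h7 := mul_le_mul_of_nonneg_left hkey (by positivity : (0:ℝ) ≤ (x:ℝ))
          calc k * L * (x:ℝ) / s = (x:ℝ) * (k * L / s) := by ring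
            _ ≤ (x:ℝ) * (c₃ * ρ ^ x) := h7
            _ = c₃ * ((x:ℝ) * ρ ^ x) := by ring
        have h7 : 0 ≤ c₂ / s ^ 2 := by positivity
        have h8 : 0 ≤ ζ₂ * (x:ℝ) := by positivity
        linarith only [hb1, h6, h7, h8]
  -- exponential group
  set X₀ := (D * sIn * α + η) / (D * (1 - 1 / ρ) / 2) with hX₀def
  have hX₀ : 0 < X₀ := by rw [hX₀def]; positivity
  clear_value X₀
  set C₈ := (D * sIn * α + η) * (ρ ^ X₀ * Real.exp (α * σ) / Real.log ρ) with hC₈def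
  have hC₈ : 0 < C₈ := by
    rw [hC₈def]
    have := Real.rpow_pos_of_pos hρ0 X₀
    positivity
  clear_value C₈
  have hkα : ρ - 1 ≤ k * α := by
    rw [div_le_iff₀ hk] at hα; linarith only [hα]
  have hG1 : ∀ x : ℕ, 1 ≤ x → ∀ s : ℝ, 0 < s → s < σ →
      (D * (sIn - s) - k * μ s * (x:ℝ)) * α * (ρ ^ x * Real.exp (α * s) / Real.log ρ)
        + μ s * (x:ℝ) * (ρ - 1) * (ρ ^ x * Real.exp (α * s) / Real.log ρ)
        - D * (x:ℝ) * (1 - 1 / ρ) * (ρ ^ x * Real.exp (α * s) / Real.log ρ)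
        + η * (ρ ^ x * Real.exp (α * s) / Real.log ρ)
        ≤ C₈ * (x:ℝ) - c₃ * ((x:ℝ) * ρ ^ x) := by
    intro x hx s hs0 hsσ
    have hx0 : (1:ℝ) ≤ (x:ℝ) := by exact_mod_cast hx
    have hρx : (0:ℝ) < ρ ^ x := pow_pos hρ0 x
    have hE : (0:ℝ) < Real.exp (α * s) := Real.exp_pos _
    set A := ρ ^ x * Real.exp (α * s) / Real.log ρ with hAdef
    have hA0 : 0 < A := by rw [hAdef]; positivity
    have hE1 : (1:ℝ) ≤ Real.exp (α * s) := Real.one_le_exp (by positivity)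
    have hAx : ρ ^ x / Real.log ρ ≤ A := by
      rw [hAdef]
      gcongr
      nlinarith only [hE1, hρx]
    have hμs : 0 < μ s := hμpos s hs0
    have key1 : (D * (sIn - s) - k * μ s * (x:ℝ)) * α + μ s * (x:ℝ) * (ρ - 1)
        ≤ D * sIn * α := by
      have h1 : 0 ≤ μ s * (x:ℝ) * (k * α - (ρ - 1)) := by
        apply mul_nonneg (by positivity)
        linarith only [hkα]
      nlinarith only [h1, mul_pos hα0 hs0, hD, hα0, hs0, mul_pos hD hs0]
    have key1' : (D * (sIn - s) - k * μ s * (x:ℝ)) * α * A + μ s * (x:ℝ) * (ρ - 1) * A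
        ≤ D * sIn * α * A := by
      have := mul_le_mul_of_nonneg_right key1 hA0.le
      nlinarith only [this]
    have key2 : c₃ * ((x:ℝ) * ρ ^ x) ≤ D * (1 - 1 / ρ) / 2 * ((x:ℝ) * A) := by
      have h1 : c₃ * ρ ^ x ≤ D * (1 - 1 / ρ) / 2 * A := by
        calc c₃ * ρ ^ x = D * (1 - 1 / ρ) / 2 * (ρ ^ x / Real.log ρ) := by
              rw [hc₃def]; ring
          _ ≤ D * (1 - 1 / ρ) / 2 * A := by gcongr
      calc c₃ * ((x:ℝ) * ρ ^ x) = (x:ℝ) * (c₃ * ρ ^ x) := by ring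
        _ ≤ (x:ℝ) * (D * (1 - 1 / ρ) / 2 * A) := by
            apply mul_le_mul_of_nonneg_left h1 (by positivity)
        _ = D * (1 - 1 / ρ) / 2 * ((x:ℝ) * A) := by ring
    rcases le_or_gt (D * sIn * α + η) (D * (1 - 1 / ρ) / 2 * (x:ℝ)) with hbig | hsmall
    · have h2 : D * sIn * α * A + η * A - D * (x:ℝ) * (1 - 1 / ρ) * A
          ≤ - (D * (1 - 1 / ρ) / 2 * ((x:ℝ) * A)) := by
        have := mul_le_mul_of_nonneg_right hbig hA0.le
        nlinarith only [this]
      have h3 : 0 ≤ C₈ * (x:ℝ) := by positivity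
      linarith only [key1', key2, h2, h3]
    · have hxX : (x:ℝ) ≤ X₀ := by
        rw [hX₀def, le_div_iff₀ (by positivity)]
        nlinarith only [hsmall]
      have hAle : A ≤ ρ ^ X₀ * Real.exp (α * σ) / Real.log ρ := by
        rw [hAdef]
        have h1 : (ρ:ℝ) ^ x ≤ ρ ^ X₀ := by
          rw [← Real.rpow_natCast ρ x]
          exact Real.rpow_le_rpow_of_exponent_le hρ.le hxX
        have h2 : Real.exp (α * s) ≤ Real.exp (α * σ) := by
          apply Real.exp_le_exp.mpr
          nlinarith only [hα0, hsσ]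
        gcongr
      have h4 : D * sIn * α * A + η * A ≤ C₈ := by
        have h5 : D * sIn * α * A + η * A = (D * sIn * α + η) * A := by ring
        rw [h5, hC₈def]
        apply mul_le_mul_of_nonneg_left hAle (by positivity)
      have h6 : 0 ≤ D * (x:ℝ) * (1 - 1 / ρ) * A := by positivity
      have h7 : C₈ ≤ C₈ * (x:ℝ) := by nlinarith only [hC₈, hx0]
      linarith only [key1', key2, h4, h6, h7]
  -- continuity margins near σ
  set δm := γ * (1 + θ) / (4 * θ) with hδmdef
  have hδm : 0 < δm := by rw [hδmdef]; positivity
  clear_value δm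
  have hδmθ : δm * θ = γ * (1 + θ) / 4 := by
    rw [hδmdef]; field_simp
  have hcμσ : ContinuousAt μ σ := by
    apply (hμC1.continuousOn.continuousAt (Ici_mem_nhds hσ0))
  obtain ⟨δA, hδA0, hδA⟩ := Metric.continuousAt_iff.mp hcμσ (min δm (m / 4))
    (by positivity)
  have hcd : ContinuousAt (deriv μ) σ := by
    have h1 : ContDiffOn ℝ 1 μ (Set.Ioi 0) := hμC1.mono Set.Ioi_subset_Ici_self
    exact (h1.continuousOn_deriv_of_isOpen isOpen_Ioi le_rfl).continuousAt
      (isOpen_Ioi.mem_nhds hσ0)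
  obtain ⟨δB, hδB0, hδB⟩ := Metric.continuousAt_iff.mp hcd (γ / (2 * p * k))
    (by positivity)
  have hdiffμ : ∀ t : ℝ, 0 < t → DifferentiableAt ℝ μ t := by
    intro t ht
    have h1 : DifferentiableOn ℝ μ (Set.Ioi 0) :=
      (hμC1.mono Set.Ioi_subset_Ici_self).differentiableOn one_ne_zero
    exact h1.differentiableAt (isOpen_Ioi.mem_nhds ht)
  -- MVT bound for x = 1 near σ
  have hF1 : ∀ s : ℝ, 0 < s → σ - δB < s → s < σ →
      D * (sIn - s) - k * μ s ≤ (q + γ / (2 * p)) * (σ - s) := by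
    intro s hs0 hsB hsσ
    have hε : 0 < σ - s := by linarith only [hsσ]
    set F : ℝ → ℝ := fun t => D * (sIn - t) - k * μ t with hFdef
    have hcont : ContinuousOn F (Set.Icc s σ) := by
      apply ContinuousOn.sub
      · exact (continuous_const.mul (continuous_const.sub continuous_id)).continuousOn
      · exact continuousOn_const.mul (hμC1.continuousOn.mono
          (fun y hy => le_trans hs0.le hy.1))
    have hder : ∀ t ∈ Set.Ioo s σ, HasDerivAt F (-D - k * deriv μ t) t := by
      intro t ht
      have hdt : DifferentiableAt ℝ μ t := hdiffμ t (lt_trans hs0 ht.1)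
      have h1 : HasDerivAt (fun u : ℝ => D * (sIn - u)) (D * (0 - 1)) t :=
        ((hasDerivAt_const t sIn).sub (hasDerivAt_id t)).const_mul D
      have h2 : HasDerivAt (fun u : ℝ => k * μ u) (k * deriv μ t) t :=
        hdt.hasDerivAt.const_mul k
      have h3 := h1.sub h2
      exact h3.congr_deriv (by ring)
    obtain ⟨ξ, hξ, hslope⟩ := exists_hasDerivAt_eq_slope F _ hsσ hcont hder
    have hFσ : F σ = 0 := by
      simp only [hFdef]
      rw [← hmdef]
      linarith only [heq]
    rw [hFσ, eq_div_iff (by linarith only [hε] : σ - s ≠ 0)] at hslope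
    -- hslope : (-D - k * deriv μ ξ) * (σ - s) = 0 - F s
    have hξd : deriv μ ξ ≤ deriv μ σ + γ / (2 * p * k) := by
      have hd : dist ξ σ < δB := by
        rw [Real.dist_eq, abs_of_nonpos (by linarith only [hξ.2] : ξ - σ ≤ 0)]
        linarith only [hξ.1, hsB]
      have := hδB hd
      rw [Real.dist_eq] at this
      have := abs_lt.mp this
      linarith only [this.1, this.2]
    have hqb : D + k * deriv μ ξ ≤ q + γ / (2 * p) := by
      rw [hqdef]
      have h1 : k * deriv μ ξ ≤ k * (deriv μ σ + γ / (2 * p * k)) :=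
        mul_le_mul_of_nonneg_left hξd hk.le
      have h2 : k * (γ / (2 * p * k)) = γ / (2 * p) := by
        field_simp
      nlinarith only [h1, h2]
    have hFs : F s = (D + k * deriv μ ξ) * (σ - s) := by
      nlinarith only [hslope]
    have h4 : (D + k * deriv μ ξ) * (σ - s) ≤ (q + γ / (2 * p)) * (σ - s) :=
      mul_le_mul_of_nonneg_right hqb hε.le
    calc D * (sIn - s) - k * μ s = F s := rfl
      _ ≤ _ := hFs ▸ h4
  -- key coefficient inequality
  have hgp2 : γ / (2 * p) * p = γ / 2 := by field_simp
  have hKc : (q + γ / (2 * p)) * p * (1 + θ) - (m - δm) * θ - D * θ + η * (1 + θ)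
      ≤ -(γ * (1 + θ)) / 4 := by
    have hqp : (q + γ / (2 * p)) * p * (1 + θ) = p * q * (1 + θ) + γ / 2 * (1 + θ) := by
      linear_combination (1 + θ) * hgp2
    rw [hηdef, hqp]
    nlinarith only [hmθ, hδmθ, mul_nonneg hD.le hθpos.le]
  -- region radius δ' and constant C₇
  have hη2 : 0 < 2 * D * θ + η := by positivity
  set δ' := min (min δA δB) (min (k * m / (4 * D)) (k * m * p / (4 * (2 * D * θ + η))))
    with hδ'def
  have hδ'0 : 0 < δ' := by
    apply lt_min (lt_min hδA0 hδB0)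
    apply lt_min
    · positivity
    · positivity
  have hδ'A : δ' ≤ δA := le_trans (min_le_left _ _) (min_le_left _ _)
  have hδ'B : δ' ≤ δB := le_trans (min_le_left _ _) (min_le_right _ _)
  have hδ'm : δ' ≤ k * m / (4 * D) := le_trans (min_le_right _ _) (min_le_left _ _)
  have hδ'p : δ' ≤ k * m * p / (4 * (2 * D * θ + η)) :=
    le_trans (min_le_right _ _) (min_le_right _ _)
  clear_value δ'
  have hδ'p1 : (0:ℝ) < δ' ^ (p + 1) := Real.rpow_pos_of_pos hδ'0 _
  have hδ'pp : (0:ℝ) < δ' ^ p := Real.rpow_pos_of_pos hδ'0 _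
  set C₇ := D * sIn * ((1 + θ) * p / δ' ^ (p + 1)) + 2 * D * θ / δ' ^ p
      + η * ((1 + θ) / δ' ^ p) with hC₇def
  have hC₇ : 0 ≤ C₇ := by
    rw [hC₇def]; positivity
  clear_value C₇
  -- nearness of μ to m
  have hμnear : ∀ s : ℝ, σ - δA < s → s < σ → m - δm ≤ μ s ∧ 3 * m / 4 ≤ μ s := by
    intro s h1 h2
    have hd : dist s σ < δA := by
      rw [Real.dist_eq, abs_of_nonpos (by linarith only [h2] : s - σ ≤ 0)]
      linarith only [h1]
    have h3 := hδA hd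
    rw [Real.dist_eq, ← hmdef] at h3
    have h4 := abs_lt.mp h3
    constructor
    · have := min_le_left δm (m / 4); linarith only [h4.1, this]
    · have := min_le_right δm (m / 4); linarith only [h4.1, this]
  -- derivative of Vt
  have hderiv : ∀ x : ℕ, 1 ≤ x → ∀ s : ℝ, 0 < s → s < σ →
      deriv (Vt x) s = α * (ρ ^ x * Real.exp (α * s)) / Real.log ρ - 1 / s ^ 2
        + (1 + if x = 1 then θ else 0) * p / (σ - s) ^ (p + 1) := by
    intro x hx s hs0 hsσ
    have hε : 0 < σ - s := by linarith only [hsσ]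
    set c := (1 : ℝ) + if x = 1 then θ else 0 with hcdef
    have heqev : Vt x =ᶠ[nhds s]
        fun t => ρ ^ x * Real.exp (α * t) / Real.log ρ + 1 / t + c / (σ - t) ^ p := by
      filter_upwards [IsOpen.mem_nhds isOpen_Ioo (⟨hs0, hsσ⟩ : s ∈ Set.Ioo 0 σ)] with t ht
      exact hVt1 x hx t ht.1 ht.2
    rw [heqev.deriv_eq]
    have h1 : HasDerivAt (fun t : ℝ => ρ ^ x * Real.exp (α * t) / Real.log ρ)
        (α * (ρ ^ x * Real.exp (α * s)) / Real.log ρ) s := by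
      have ha : HasDerivAt (fun t : ℝ => α * t) α s := by
        simpa using (hasDerivAt_id s).const_mul α
      have hb := (ha.exp.const_mul ((ρ:ℝ) ^ x)).div_const (Real.log ρ)
      exact hb.congr_deriv (by ring)
    have h2 : HasDerivAt (fun t : ℝ => 1 / t) (-(1 / s ^ 2)) s := by
      simpa [one_div] using hasDerivAt_inv (ne_of_gt hs0)
    have h3 : HasDerivAt (fun t : ℝ => c / (σ - t) ^ p) (c * p / (σ - s) ^ (p + 1)) s := by
      have ha : HasDerivAt (fun t : ℝ => σ - t) (-1) s := by
        exact (hasDerivAt_id' s).const_sub σ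
      have hb : HasDerivAt (fun y : ℝ => y ^ p) (p * (σ - s) ^ (p - 1)) (σ - s) :=
        Real.hasDerivAt_rpow_const (Or.inl (ne_of_gt hε))
      have hcomp : HasDerivAt (fun t : ℝ => (σ - t) ^ p) (p * (σ - s) ^ (p - 1) * (-1)) s :=
        hb.comp s ha
      have hne : (σ - s) ^ p ≠ 0 := ne_of_gt (Real.rpow_pos_of_pos hε p)
      have hinv := (hcomp.inv hne).const_mul c
      have hfun : (fun t : ℝ => c / (σ - t) ^ p) = fun t : ℝ => c * ((σ - t) ^ p)⁻¹ := by
        funext t; rw [div_eq_mul_inv]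
      rw [hfun]
      refine hinv.congr_deriv ?_
      have key : ((σ - s) ^ p) ^ 2 = (σ - s) ^ (p + 1) * (σ - s) ^ (p - 1) := by
        rw [sq, ← Real.rpow_add hε, ← Real.rpow_add hε]
        ring_nf
      have hne1 : (σ - s) ^ (p + 1) ≠ 0 := ne_of_gt (Real.rpow_pos_of_pos hε _)
      have hne2 : (σ - s) ^ (p - 1) ≠ 0 := ne_of_gt (Real.rpow_pos_of_pos hε _)
      rw [key]
      field_simp
    have hsum : HasDerivAt (fun t : ℝ => ρ ^ x * Real.exp (α * t) / Real.log ρ + 1 / t + c / (σ - t) ^ p) _ s := (h1.add h2).add h3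
    rw [hsum.deriv]
    rw [hcdef]
    ring
  -- the final constant ζ
  have hζη : 0 ≤ η ^ 2 / (4 * c₂) := by positivity
  refine ⟨η, C₈ + ζ₂ + η ^ 2 / (4 * c₂) + C₇ + 1, by linarith only [hγ, hηdef], by
    linarith only [hC₈, hζ₂, hζη, hC₇], ?_⟩
  intro x hx s hs0 hsσ
  have hx0 : (1:ℝ) ≤ (x:ℝ) := by exact_mod_cast hx
  have hε : 0 < σ - s := by linarith only [hsσ]
  have hsIn' : s < sIn := by linarith only [hsσ, hσIn]
  have hgp : (0:ℝ) < (σ - s) ^ p := Real.rpow_pos_of_pos hε p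
  have hgp1 : (0:ℝ) < (σ - s) ^ (p + 1) := Real.rpow_pos_of_pos hε _
  have hrpadd : (σ - s) ^ (p + 1) = (σ - s) ^ p * (σ - s) := Real.rpow_add_one (ne_of_gt hε) p
  have hμs : 0 < μ s := hμpos s hs0
  have hρx : (0:ℝ) < ρ ^ x := pow_pos hρ0 x
  have hE : (0:ℝ) < Real.exp (α * s) := Real.exp_pos _
  have hVtx : Vt x s = ρ ^ x * Real.exp (α * s) / Real.log ρ + 1 / s
      + (1 + if x = 1 then θ else 0) / (σ - s) ^ p := hVt1 x hx s hs0 hsσ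
  have hxp1 : x + 1 ≠ 1 := by omega
  have hVtxp : Vt (x + 1) s = ρ ^ (x + 1) * Real.exp (α * s) / Real.log ρ + 1 / s
      + 1 / (σ - s) ^ p := by
    rw [hVt1 (x + 1) (by omega) s hs0 hsσ]
    simp [hxp1, show x ≠ 0 by omega]
  have hJp : Vt (x + 1) s - Vt x s
      = (ρ - 1) * (ρ ^ x * Real.exp (α * s) / Real.log ρ)
        + (1 - (1 + if x = 1 then θ else 0)) / (σ - s) ^ p := by
    rw [hVtxp, hVtx, pow_succ]
    ring
  have hJm : D * (x:ℝ) * (Vt (x - 1) s - Vt x s)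
      ≤ -(D * (x:ℝ) * (1 - 1 / ρ) * (ρ ^ x * Real.exp (α * s) / Real.log ρ))
        + D * (x:ℝ) * (((if x = 2 then θ else 0) - (if x = 1 then θ else 0)) / (σ - s) ^ p) := by
    by_cases hx1' : x = 1
    · subst hx1'
      have e0 : Vt 0 s = 0 := hVt0 0 s hs0 hsIn' (Or.inl rfl)
      rw [e0, hVtx]
      have p1 : (0:ℝ) ≤ D * (Real.exp (α * s) / Real.log ρ) := by positivity
      have p2 : (0:ℝ) ≤ D * (1 / s) := by positivity
      have p3 : (0:ℝ) ≤ D * (1 / (σ - s) ^ p) := by positivity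
      norm_num
      ring_nf
      have hρρ : D * ρ * ρ⁻¹ * Real.exp (α * s) * (Real.log ρ)⁻¹
          = D * Real.exp (α * s) * (Real.log ρ)⁻¹ := by
        field_simp
      have q1 : (0:ℝ) ≤ D * Real.exp (α * s) * (Real.log ρ)⁻¹ := by positivity
      have q2 : (0:ℝ) ≤ D * s⁻¹ := by positivity
      have q3 : (0:ℝ) ≤ D * ((-s + σ) ^ p)⁻¹ := by
        have h0 : (0:ℝ) < (-s + σ) ^ p := Real.rpow_pos_of_pos (by linarith only [hsσ]) p
        positivity
      linarith only [hρρ, q1, q2, q3]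
    · have hx2 : 1 ≤ x - 1 := by omega
      have hVtxm : Vt (x - 1) s = ρ ^ (x - 1) * Real.exp (α * s) / Real.log ρ + 1 / s
          + (1 + if x - 1 = 1 then θ else 0) / (σ - s) ^ p := hVt1 (x - 1) hx2 s hs0 hsσ
      have hxif : (if x - 1 = 1 then θ else (0:ℝ)) = (if x = 2 then θ else 0) := by
        have hiff : x - 1 = 1 ↔ x = 2 := by omega
        simp [hiff]
      have hpow : (ρ:ℝ) ^ (x - 1) = ρ ^ x / ρ := by
        rw [eq_div_iff (ne_of_gt hρ0), ← pow_succ]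
        congr 1
        omega
      apply le_of_eq
      rw [hVtxm, hVtx, hxif, hpow, if_neg hx1']
      ring
  -- group inequalities
  have hI1 := hG1 x hx s hs0 hsσ
  have hI2 : (D * (sIn - s) - k * μ s * (x:ℝ)) * (-(1 / s ^ 2)) + η * (1 / s)
      ≤ c₃ * ((x:ℝ) * ρ ^ x) + (ζ₂ + η ^ 2 / (4 * c₂)) * (x:ℝ) := by
    have e1 : (D * (sIn - s) - k * μ s * (x:ℝ)) * (-(1 / s ^ 2))
        = -(D * (sIn - s)) / s ^ 2 + k * μ s * (x:ℝ) / s ^ 2 := by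
      ring
    have e2 : η * (1 / s) ≤ c₂ / s ^ 2 + η ^ 2 / (4 * c₂) := by
      rw [mul_one_div]
      exact amgm' η c₂ s hc₂ hs0
    have e3 : -(D * (sIn - s)) / s ^ 2 ≤ -(2 * c₂) / s ^ 2 := by
      have h1 : -(D * (sIn - s)) ≤ -(2 * c₂) := by
        rw [hc₂def]
        nlinarith only [hD, hsσ]
      rw [div_le_div_iff₀ (by positivity) (by positivity)]
      nlinarith only [mul_le_mul_of_nonneg_right h1 (sq_nonneg s)]
    have e4 := hS x hx s hs0 hsσ
    have e5 : η ^ 2 / (4 * c₂) ≤ η ^ 2 / (4 * c₂) * (x:ℝ) := by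
      nlinarith only [hζη, hx0]
    ring_nf at e1 e2 e3 e4 e5 ⊢
    linarith only [e1, e2, e3, e4, e5]
  have hI3 : (D * (sIn - s) - k * μ s * (x:ℝ))
        * ((1 + if x = 1 then θ else 0) * p / (σ - s) ^ (p + 1))
      + μ s * (x:ℝ) * ((1 - (1 + if x = 1 then θ else 0)) / (σ - s) ^ p)
      + D * (x:ℝ) * (((if x = 2 then θ else 0) - (if x = 1 then θ else 0)) / (σ - s) ^ p)
      + η * ((1 + if x = 1 then θ else 0) / (σ - s) ^ p)
      ≤ C₇ * (x:ℝ) := by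
    have hC₇x : C₇ ≤ C₇ * (x:ℝ) := by nlinarith only [hC₇, hx0]
    have ht10 : (0:ℝ) ≤ (if x = 1 then θ else 0) := by
      split_ifs
      · exact hθpos.le
      · exact le_rfl
    rcases le_or_gt s (σ - δ') with hmid | hnear
    · -- middle region : σ - s ≥ δ'
      have hεδ : δ' ≤ σ - s := by linarith only [hmid]
      have hg1 : δ' ^ (p + 1) ≤ (σ - s) ^ (p + 1) :=
        Real.rpow_le_rpow hδ'0.le hεδ (by linarith only [hp0])
      have hg2 : δ' ^ p ≤ (σ - s) ^ p := Real.rpow_le_rpow hδ'0.le hεδ hp0.le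
      have hcxθ : 1 + (if x = 1 then θ else 0) ≤ 1 + θ := by
        split_ifs
        · exact le_rfl
        · linarith only [hθpos]
      have b1 : (D * (sIn - s) - k * μ s * (x:ℝ))
            * ((1 + if x = 1 then θ else 0) * p / (σ - s) ^ (p + 1))
          ≤ D * sIn * ((1 + θ) * p / δ' ^ (p + 1)) := by
        rcases le_or_gt (D * (sIn - s) - k * μ s * (x:ℝ)) 0 with hF | hF
        · have h1 : (0:ℝ) ≤ (1 + if x = 1 then θ else 0) * p / (σ - s) ^ (p + 1) := by
            positivity
          have h2 := mul_nonpos_of_nonpos_of_nonneg hF h1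
          have h3 : (0:ℝ) ≤ D * sIn * ((1 + θ) * p / δ' ^ (p + 1)) := by positivity
          linarith only [h2, h3]
        · have hFle : D * (sIn - s) - k * μ s * (x:ℝ) ≤ D * sIn := by
            have h4 : 0 ≤ k * μ s * (x:ℝ) := by positivity
            nlinarith only [h4, mul_pos hD hs0]
          calc (D * (sIn - s) - k * μ s * (x:ℝ))
                * ((1 + if x = 1 then θ else 0) * p / (σ - s) ^ (p + 1))
              ≤ D * sIn * ((1 + if x = 1 then θ else 0) * p / (σ - s) ^ (p + 1)) := by
                apply mul_le_mul_of_nonneg_right hFle (by positivity)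
            _ ≤ D * sIn * ((1 + θ) * p / δ' ^ (p + 1)) := by gcongr
      have b2 : μ s * (x:ℝ) * ((1 - (1 + if x = 1 then θ else 0)) / (σ - s) ^ p) ≤ 0 := by
        apply mul_nonpos_of_nonneg_of_nonpos (by positivity)
        apply div_nonpos_of_nonpos_of_nonneg _ hgp.le
        linarith only [ht10]
      have b3 : D * (x:ℝ) * (((if x = 2 then θ else 0) - (if x = 1 then θ else 0)) / (σ - s) ^ p)
          ≤ 2 * D * θ / δ' ^ p := by
        by_cases hx2' : x = 2
        · subst hx2'
          norm_num
          calc D * 2 * (θ / (σ - s) ^ p) = 2 * D * θ / (σ - s) ^ p := by ring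
            _ ≤ 2 * D * θ / δ' ^ p := by gcongr
        · have h5 : (if x = 2 then θ else (0:ℝ)) = 0 := if_neg hx2'
          rw [h5]
          have h6 : (0:ℝ) ≤ 2 * D * θ / δ' ^ p := by positivity
          have h7 : D * (x:ℝ) * ((0 - (if x = 1 then θ else 0)) / (σ - s) ^ p) ≤ 0 := by
            apply mul_nonpos_of_nonneg_of_nonpos (by positivity)
            apply div_nonpos_of_nonpos_of_nonneg _ hgp.le
            linarith only [ht10]
          linarith only [h6, h7]
      have b4 : η * ((1 + if x = 1 then θ else 0) / (σ - s) ^ p)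
          ≤ η * ((1 + θ) / δ' ^ p) := by gcongr
      rw [hC₇def] at hC₇x ⊢
      ring_nf at b1 b2 b3 b4 hC₇x ⊢
      linarith only [b1, b2, b3, b4, hC₇x]
    · -- near region : σ - s < δ'
      have hδ'ε : σ - s < δ' := by linarith only [hnear]
      obtain ⟨hμ1, hμ2⟩ := hμnear s (by linarith only [hnear, hδ'A]) hsσ
      by_cases hx1' : x = 1
      · subst hx1'
        have hFb := hF1 s hs0 (by linarith only [hnear, hδ'B]) hsσ
        norm_num
        have t1 : (D * (sIn - s) - k * μ s) * ((1 + θ) * p / (σ - s) ^ (p + 1))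
            ≤ (q + γ / (2 * p)) * p * (1 + θ) / (σ - s) ^ p := by
          calc (D * (sIn - s) - k * μ s) * ((1 + θ) * p / (σ - s) ^ (p + 1))
              ≤ ((q + γ / (2 * p)) * (σ - s)) * ((1 + θ) * p / (σ - s) ^ (p + 1)) :=
                mul_le_mul_of_nonneg_right hFb (by positivity)
            _ = (q + γ / (2 * p)) * p * (1 + θ) * ((σ - s) / (σ - s) ^ (p + 1)) := by ring
            _ = (q + γ / (2 * p)) * p * (1 + θ) / (σ - s) ^ p := by
                rw [hrpadd]
                field_simp
        have t2 : μ s * (-θ / (σ - s) ^ p) ≤ (m - δm) * (-θ / (σ - s) ^ p) := by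
          have hc : -θ / (σ - s) ^ p ≤ 0 :=
            div_nonpos_of_nonpos_of_nonneg (by linarith only [hθpos]) hgp.le
          exact mul_le_mul_of_nonpos_right hμ1 hc
        have tsum : (q + γ / (2 * p)) * p * (1 + θ) / (σ - s) ^ p
              + (m - δm) * (-θ / (σ - s) ^ p) + D * (-θ / (σ - s) ^ p)
              + η * ((1 + θ) / (σ - s) ^ p)
            = ((q + γ / (2 * p)) * p * (1 + θ) - (m - δm) * θ - D * θ + η * (1 + θ))
              / (σ - s) ^ p := by
          ring
        have tneg : ((q + γ / (2 * p)) * p * (1 + θ) - (m - δm) * θ - D * θ + η * (1 + θ))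
            / (σ - s) ^ p ≤ 0 := by
          apply div_nonpos_of_nonpos_of_nonneg _ hgp.le
          have h0 : 0 < γ * (1 + θ) := by positivity
          linarith only [hKc, h0]
        linarith only [t1, t2, tsum, tneg, hC₇]
      · -- x ≥ 2
        have hx2 : (2:ℝ) ≤ (x:ℝ) := by exact_mod_cast (by omega : 2 ≤ x)
        have hFb : D * (sIn - s) - k * μ s * (x:ℝ) ≤ -(k * m / 4) := by
          have h1 : D * (sIn - s) ≤ k * m + D * δ' := by
            nlinarith only [heq, hδ'ε, hD]
          have h2 : k * (3 * m / 4) * 2 ≤ k * μ s * (x:ℝ) := by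
            have h3 : k * (3 * m / 4) ≤ k * μ s := by nlinarith only [hμ2, hk]
            nlinarith only [h3, hx2, mul_pos hk (by linarith only [hm] : (0:ℝ) < 3 * m / 4)]
          have h4 : D * δ' ≤ k * m / 4 := by
            rw [le_div_iff₀ (by positivity : (0:ℝ) < 4 * D)] at hδ'm
            nlinarith only [hδ'm]
          linarith only [h1, h2, h4]
        simp only [if_neg hx1']
        have u1 : (D * (sIn - s) - k * μ s * (x:ℝ)) * ((1 + 0) * p / (σ - s) ^ (p + 1))
            ≤ -(k * m / 4) * (p / (σ - s) ^ (p + 1)) := by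
          have h10 := mul_le_mul_of_nonneg_right hFb
            (by positivity : (0:ℝ) ≤ p / (σ - s) ^ (p + 1))
          calc (D * (sIn - s) - k * μ s * (x:ℝ)) * ((1 + 0) * p / (σ - s) ^ (p + 1))
              = (D * (sIn - s) - k * μ s * (x:ℝ)) * (p / (σ - s) ^ (p + 1)) := by norm_num
            _ ≤ -(k * m / 4) * (p / (σ - s) ^ (p + 1)) := h10
        have u2 : μ s * (x:ℝ) * ((1 - (1 + 0)) / (σ - s) ^ p) = 0 := by norm_num
        have u3 : D * (x:ℝ) * (((if x = 2 then θ else 0) - 0) / (σ - s) ^ p)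
            ≤ 2 * D * θ / (σ - s) ^ p := by
          by_cases hx2' : x = 2
          · subst hx2'
            norm_num
            apply le_of_eq
            ring
          · simp only [if_neg hx2']
            have h11 : D * (x:ℝ) * ((0 - 0) / (σ - s) ^ p) = 0 := by ring
            rw [h11]
            positivity
        have u5 : -(k * m / 4) * (p / (σ - s) ^ (p + 1)) + 2 * D * θ / (σ - s) ^ p
            + η * ((1 + 0) / (σ - s) ^ p) ≤ 0 := by
          have hδ'c : (2 * D * θ + η) * (σ - s) ≤ k * m * p / 4 := by
            have h8 := hδ'p
            rw [le_div_iff₀ (by positivity : (0:ℝ) < 4 * (2 * D * θ + η))] at h8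
            nlinarith only [h8, hδ'ε, hη2]
          have h9 : (2 * D * θ + η) / (σ - s) ^ p
              ≤ (k * m / 4 * p) / ((σ - s) ^ p * (σ - s)) := by
            rw [div_le_div_iff₀ hgp (by positivity)]
            nlinarith only [mul_le_mul_of_nonneg_right hδ'c hgp.le]
          rw [← hrpadd] at h9
          have heq2 : -(k * m / 4) * (p / (σ - s) ^ (p + 1))
              = -((k * m / 4 * p) / (σ - s) ^ (p + 1)) := by ring
          have heq3 : 2 * D * θ / (σ - s) ^ p + η * ((1 + 0) / (σ - s) ^ p)
              = (2 * D * θ + η) / (σ - s) ^ p := by ring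
          linarith only [h9, heq2, heq3]
        have u6 : 0 ≤ C₇ * (x:ℝ) := mul_nonneg hC₇ (by positivity)
        linarith only [u1, u2, u3, u5, u6]
  have hdx := hderiv x hx s hs0 hsσ
  have hdx := hderiv x hx s hs0 hsσ
  rw [hVtx] at hJm
  rw [hdx, hJp, hVtx]
  ring_nf at hI1 hI2 hI3 hJm ⊢
  linarith only [hI1, hI2, hI3, hJm, hx0]
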